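/- For every prime p and all integers h, n ≥ 1 there exists an integer M ≥ 0, depending only on p, h and n, with the following property. Let S be a commutative ℤ_p-algebra in which p is a non-zero-divisor (equivalently, a flat ℤ_p-algebra). Let (A₁,B₁) and (A₂,B₂) be p^n-isogeny pairs of h×h matrices over S, let m ≥ M+1 be an integer, and let g be an invertible h×h matrix over S such that g·A₁ ≡ A₂ modulo p^m and B₁·g⁻¹ ≡ B₂ modulo p^m. Then there exists a unique invertible h×h matrix g̃ over S such that g̃·A₁ = A₂ and B₁·g̃⁻¹ = B₂, and moreover g̃ ≡ g modulo p^{m−M}. -/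
import Mathlib


/-- Strong rigidity of `p^n`-isogeny pairs of matrices: there is a constant `M`, depending
only on `p`, `h`, `n`, such that over any flat `ℤ_p`-algebra `S`, an invertible matrix `g`
intertwining two `p^n`-isogeny pairs modulo `p^m` with `m ≥ M + 1` can be corrected to a
unique invertible matrix `g̃` intertwining them exactly, with moreover `g̃ ≡ g mod p^(m-M)`. -/
theorem stmt_2 (p : ℕ) [Fact p.Prime] (h n : ℕ) (hh : 1 ≤ h) (hn : 1 ≤ n) :
    ∃ M : ℕ, ∀ (S : Type) [CommRing S] [Algebra ℤ_[p] S],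
      (p : S) ∈ nonZeroDivisors S →
      ∀ A₁ B₁ A₂ B₂ : Matrix (Fin h) (Fin h) S,
        A₁ * B₁ = (p : S) ^ n • (1 : Matrix (Fin h) (Fin h) S) →
        B₁ * A₁ = (p : S) ^ n • (1 : Matrix (Fin h) (Fin h) S) →
        A₂ * B₂ = (p : S) ^ n • (1 : Matrix (Fin h) (Fin h) S) →
        B₂ * A₂ = (p : S) ^ n • (1 : Matrix (Fin h) (Fin h) S) →
        ∀ m : ℕ, M + 1 ≤ m →
        ∀ g : (Matrix (Fin h) (Fin h) S)ˣ,
          (∃ C : Matrix (Fin h) (Fin h) S,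
            (g : Matrix (Fin h) (Fin h) S) * A₁ - A₂ = (p : S) ^ m • C) →
          (∃ C : Matrix (Fin h) (Fin h) S,
            B₁ * ((g⁻¹ : (Matrix (Fin h) (Fin h) S)ˣ) : Matrix (Fin h) (Fin h) S) - B₂
              = (p : S) ^ m • C) →
          ∃ gt : (Matrix (Fin h) (Fin h) S)ˣ,
            ((gt : Matrix (Fin h) (Fin h) S) * A₁ = A₂ ∧
             B₁ * ((gt⁻¹ : (Matrix (Fin h) (Fin h) S)ˣ) : Matrix (Fin h) (Fin h) S) = B₂) ∧
            (∃ C : Matrix (Fin h) (Fin h) S,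
              (gt : Matrix (Fin h) (Fin h) S) - (g : Matrix (Fin h) (Fin h) S)
                = (p : S) ^ (m - M) • C) ∧
            (∀ gt' : (Matrix (Fin h) (Fin h) S)ˣ,
              (gt' : Matrix (Fin h) (Fin h) S) * A₁ = A₂ →
              B₁ * ((gt'⁻¹ : (Matrix (Fin h) (Fin h) S)ˣ) : Matrix (Fin h) (Fin h) S) = B₂ →
              gt' = gt) := by
  refine ⟨n, fun S _ _ hp A₁ B₁ A₂ B₂ h11 h12 h21 h22 m hm g hgA hgB => ?_⟩
  obtain ⟨C, hC⟩ := hgA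
  obtain ⟨D, hD⟩ := hgB
  have hnm : n ≤ m := Nat.le_of_succ_le hm
  have hpow : (p : S) ^ (m - n) * (p : S) ^ n = (p : S) ^ m := pow_sub_mul_pow _ hnm
  have hpow' : (p : S) ^ n * (p : S) ^ (m - n) = (p : S) ^ m := by
    rw [mul_comm]; exact hpow
  have hpn : (p : S) ^ n ∈ nonZeroDivisors S := pow_mem hp n
  have cancel : ∀ X Y : Matrix (Fin h) (Fin h) S,
      (p : S) ^ n • X = (p : S) ^ n • Y → X = Y := by
    intro X Y e
    ext i j
    have e' : (p : S) ^ n * X i j = (p : S) ^ n * Y i j := by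
      simpa [Matrix.smul_apply] using congrFun (congrFun e i) j
    exact (mul_cancel_left_mem_nonZeroDivisors hpn).mp e'
  have hC' : (g : Matrix (Fin h) (Fin h) S) * A₁ = A₂ + (p : S) ^ m • C :=
    sub_eq_iff_eq_add.mp hC |>.trans (add_comm _ _)
  have hD' : B₁ * ((g⁻¹ : (Matrix (Fin h) (Fin h) S)ˣ) : Matrix (Fin h) (Fin h) S)
      = B₂ + (p : S) ^ m • D := sub_eq_iff_eq_add.mp hD |>.trans (add_comm _ _)
  set gt0 : Matrix (Fin h) (Fin h) S :=
    (g : Matrix (Fin h) (Fin h) S) - (p : S) ^ (m - n) • (C * B₁) with hgt0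
  set k : Matrix (Fin h) (Fin h) S :=
    ((g⁻¹ : (Matrix (Fin h) (Fin h) S)ˣ) : Matrix (Fin h) (Fin h) S)
      - (p : S) ^ (m - n) • (A₁ * D) with hk0
  have hgtA : gt0 * A₁ = A₂ := by
    have e1 : gt0 * A₁ = (g : Matrix (Fin h) (Fin h) S) * A₁
        - (p : S) ^ (m - n) • (C * (B₁ * A₁)) := by
      rw [hgt0, sub_mul, Matrix.smul_mul, mul_assoc]
    rw [e1, h12, Matrix.mul_smul, mul_one, smul_smul, hpow, hC']
    abel
  have hBk : B₁ * k = B₂ := by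
    have e1 : B₁ * k = B₁ * ((g⁻¹ : (Matrix (Fin h) (Fin h) S)ˣ) : Matrix (Fin h) (Fin h) S)
        - (p : S) ^ (m - n) • (B₁ * A₁ * D) := by
      rw [hk0, mul_sub, Matrix.mul_smul, mul_assoc]
    rw [e1, hD', h12, Matrix.smul_mul, one_mul, smul_smul, hpow]
    abel
  have hk : (p : S) ^ n • k = A₁ * B₂ := by
    have e1 : A₁ * B₂ = A₁ * (B₁ * ((g⁻¹ : (Matrix (Fin h) (Fin h) S)ˣ) : Matrix (Fin h) (Fin h) S))
        - (p : S) ^ m • (A₁ * D) := by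
      rw [hD', mul_add, Matrix.mul_smul]; abel
    rw [e1, ← mul_assoc, h11, Matrix.smul_mul, one_mul, hk0, smul_sub, smul_smul, hpow']
  have gtk : gt0 * k = 1 := by
    apply cancel
    calc (p : S) ^ n • (gt0 * k) = gt0 * ((p : S) ^ n • k) := (Matrix.mul_smul _ _ _).symm
      _ = gt0 * (A₁ * B₂) := by rw [hk]
      _ = (gt0 * A₁) * B₂ := (mul_assoc _ _ _).symm
      _ = (p : S) ^ n • 1 := by rw [hgtA, h21]
  have kgt : k * gt0 = 1 := mul_eq_one_comm.mp gtk
  refine ⟨⟨gt0, k, gtk, kgt⟩, ⟨hgtA, hBk⟩, ⟨-(C * B₁), ?_⟩, ?_⟩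
  · show gt0 - (g : Matrix (Fin h) (Fin h) S) = (p : S) ^ (m - n) • (-(C * B₁))
    rw [smul_neg, hgt0]
    abel
  · intro gt' hA' _
    refine Units.ext ?_
    refine cancel _ _ ?_
    calc (p : S) ^ n • ((gt' : Matrix (Fin h) (Fin h) S))
        = (gt' : Matrix (Fin h) (Fin h) S) * (A₁ * B₁) := by
          rw [h11, Matrix.mul_smul, mul_one]
      _ = ((gt' : Matrix (Fin h) (Fin h) S) * A₁) * B₁ := (mul_assoc _ _ _).symm
      _ = (gt0 * A₁) * B₁ := by rw [hA', hgtA]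
      _ = (p : S) ^ n • gt0 := by rw [mul_assoc, h11, Matrix.mul_smul, mul_one]
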